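/- Let L be a unimodular probability measure on rooted graphs and B a Borel set of rooted graphs with L(B) = 1. Then L-almost surely, (G,x) ∈ B for every vertex x of G ("everything shows at the root"). -/

import Mathlib

open scoped ENNReal
open MeasureTheory

/-- Rooted countable graphs are modeled as adjacency functions on `ℕ`, the root being `0`. -/
abbrev Env : Type := ℕ → ℕ → Bool

/-- Relabeling the vertices of a graph by a permutation of `ℕ`. -/
def relabel (φ : ℕ ≃ ℕ) (A : Env) : Env := fun u v => A (φ.symm u) (φ.symm v)

lemma relabel_relabel (ψ φ : ℕ ≃ ℕ) (A : Env) :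
    relabel ψ (relabel φ A) = relabel (φ.trans ψ) A := by
  funext u v; simp [relabel]

lemma measurable_relabel (φ : ℕ ≃ ℕ) : Measurable (relabel φ) := by
  apply measurable_pi_lambda
  intro u
  apply measurable_pi_lambda
  intro v
  exact (measurable_pi_apply (φ.symm v)).comp (measurable_pi_apply (φ.symm u))

theorem everything_shows_at_the_root (L : Measure Env) [IsProbabilityMeasure L]
    (hMTP : ∀ f : Env → ℕ → ℕ → ℝ≥0∞,
      (∀ (φ : ℕ ≃ ℕ) (A : Env) (x y : ℕ), f (relabel φ A) (φ x) (φ y) = f A x y) →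
      Measurable (fun p : Env × ℕ × ℕ => f p.1 p.2.1 p.2.2) →
      ∫⁻ A, ∑' x, f A 0 x ∂L = ∫⁻ A, ∑' x, f A x 0 ∂L)
    (B : Set Env) (hBmeas : MeasurableSet B)
    (hBinv : ∀ (φ : ℕ ≃ ℕ), φ 0 = 0 → ∀ A : Env, relabel φ A ∈ B ↔ A ∈ B)
    (hB : L B = 1) :
    L {A : Env | ∀ x : ℕ, relabel (Equiv.swap 0 x) A ∈ B} = 1 := by
  classical
  -- the mass transport function: send 1 from the root to each `y` with bad rerooting
  set f : Env → ℕ → ℕ → ℝ≥0∞ :=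
    fun A _ y => Set.indicator Bᶜ (fun _ => 1) (relabel (Equiv.swap 0 y) A) with hf
  have hinv : ∀ (φ : ℕ ≃ ℕ) (A : Env) (x y : ℕ),
      f (relabel φ A) (φ x) (φ y) = f A x y := by
    intro φ A x y
    have hiff : relabel (Equiv.swap 0 (φ y)) (relabel φ A) ∈ B ↔
        relabel (Equiv.swap 0 y) A ∈ B := by
      set θ : ℕ ≃ ℕ := (Equiv.swap 0 y).symm.trans (φ.trans (Equiv.swap 0 (φ y))) with hθ
      have h1 : relabel (Equiv.swap 0 (φ y)) (relabel φ A)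
          = relabel θ (relabel (Equiv.swap 0 y) A) := by
        have he : φ.trans (Equiv.swap 0 (φ y)) = (Equiv.swap 0 y).trans θ := by
          ext n; simp [hθ]
        rw [relabel_relabel, relabel_relabel, he]
      have hθ0 : θ 0 = 0 := by simp [hθ]
      rw [h1, hBinv θ hθ0]
    simp only [hf, Set.indicator_apply, Set.mem_compl_iff]
    by_cases h : relabel (Equiv.swap 0 y) A ∈ B
    · simp [h, hiff.2 h]
    · simp [h, hiff.not.2 h]
  have hmeas : Measurable (fun p : Env × ℕ × ℕ => f p.1 p.2.1 p.2.2) := by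
    apply measurable_from_prod_countable_left
    intro ⟨x, y⟩
    show Measurable fun A : Env => Set.indicator Bᶜ (fun _ => (1 : ℝ≥0∞)) (relabel (Equiv.swap 0 y) A)
    exact (measurable_const.indicator hBmeas.compl).comp (measurable_relabel (Equiv.swap 0 y))
  have hkey := hMTP f hinv hmeas
  -- the RHS is 0
  have hR : ∫⁻ A, ∑' x : ℕ, f A x 0 ∂L = 0 := by
    have hc : L Bᶜ = 0 := by
      rw [prob_compl_eq_zero_iff hBmeas]; exact hB
    have h0 : ∀ᵐ A ∂L, (∑' x : ℕ, f A x 0) = 0 := by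
      filter_upwards [(ae_iff.2 (by exact hc) : ∀ᵐ A ∂L, A ∈ B)] with A hA
      have : f A 0 0 = 0 := by
        simp only [hf, Set.indicator_apply_eq_zero, Set.mem_compl_iff]
        intro h
        exact absurd (by rw [Equiv.swap_self]; exact hA : relabel (Equiv.swap 0 0) A ∈ B) h
      have hall : ∀ x : ℕ, f A x 0 = 0 := fun x => this
      exact ENNReal.tsum_eq_zero.2 hall
    calc ∫⁻ A, ∑' x : ℕ, f A x 0 ∂L = ∫⁻ _, 0 ∂L := lintegral_congr_ae h0
      _ = 0 := lintegral_zero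
  -- hence the LHS is 0, so a.e. every rerooting is in B
  have hL : ∫⁻ A, ∑' x : ℕ, f A 0 x ∂L = 0 := hkey.trans hR
  have hmeasL : Measurable (fun A : Env => ∑' x : ℕ, f A 0 x) := by
    apply Measurable.ennreal_tsum
    intro x
    exact (measurable_const.indicator hBmeas.compl).comp (measurable_relabel _)
  have hae : ∀ᵐ A ∂L, (∑' x : ℕ, f A 0 x) = 0 :=
    (lintegral_eq_zero_iff hmeasL).1 hL
  have hae2 : ∀ᵐ A ∂L, ∀ x : ℕ, relabel (Equiv.swap 0 x) A ∈ B := by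
    filter_upwards [hae] with A hA x
    have hx : f A 0 x = 0 := ENNReal.tsum_eq_zero.1 hA x
    by_contra h
    simp [hf, Set.indicator_apply, h] at hx
  have hS : MeasurableSet {A : Env | ∀ x : ℕ, relabel (Equiv.swap 0 x) A ∈ B} := by
    have : {A : Env | ∀ x : ℕ, relabel (Equiv.swap 0 x) A ∈ B}
        = ⋂ x : ℕ, relabel (Equiv.swap 0 x) ⁻¹' B := by
      ext A; simp [Set.mem_iInter]
    rw [this]
    exact MeasurableSet.iInter fun x => (measurable_relabel _) hBmeas
  rw [← prob_compl_eq_zero_iff hS, Set.compl_setOf]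
  exact ae_iff.1 hae2
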